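/- Let N ≥ 1, let v ∈ ℂ^N have all entries nonzero, and let G be a connected simple graph on the vertex set {1,…,N}. For each edge e = {s,t} of G, let H_e be an N×N complex Hermitian positive semidefinite matrix whose entries are zero outside the rows and columns indexed by s and t, such that H_e v = 0 and such that for every x ∈ ℂ^N, H_e x = 0 implies x_s v_t = x_t v_s. Then the sum H := Σ_e H_e over all edges of G is Hermitian positive semidefinite, satisfies H v = 0, and its kernel (as a linear map x ↦ H x) equals the one-dimensional span of v; equivalently, rank(H) = N − 1. -/

import Mathlib

open Matrix ComplexOrder

lemma sum_mulVec_aux {N : ℕ} (s : Finset (Sym2 (Fin N)))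
    (H : Sym2 (Fin N) → Matrix (Fin N) (Fin N) ℂ) (x : Fin N → ℂ) :
    (∑ e ∈ s, H e) *ᵥ x = ∑ e ∈ s, H e *ᵥ x := by
  classical
  induction s using Finset.induction with
  | empty => simp [Matrix.zero_mulVec]
  | insert a s h ih => simp [Finset.sum_insert h, Matrix.add_mulVec, ih]

theorem stmt_4 (N : ℕ) (hN : 1 ≤ N) (v : Fin N → ℂ) (hv : ∀ i, v i ≠ 0)
    (G : SimpleGraph (Fin N)) [DecidableRel G.Adj] (hG : G.Connected)
    (H : Sym2 (Fin N) → Matrix (Fin N) (Fin N) ℂ)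
    (hPSD : ∀ e ∈ G.edgeSet, (H e).PosSemidef)
    (hsupp : ∀ e ∈ G.edgeSet, ∀ i j : Fin N, (i ∉ e ∨ j ∉ e) → H e i j = 0)
    (hHv : ∀ e ∈ G.edgeSet, H e *ᵥ v = 0)
    (hkerE : ∀ e ∈ G.edgeSet, ∀ s t : Fin N, e = s(s, t) →
      ∀ x : Fin N → ℂ, H e *ᵥ x = 0 → x s * v t = x t * v s) :
    (∑ e ∈ G.edgeFinset, H e).PosSemidef ∧
      (∑ e ∈ G.edgeFinset, H e) *ᵥ v = 0 ∧
      (∀ x : Fin N → ℂ,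
        (∑ e ∈ G.edgeFinset, H e) *ᵥ x = 0 ↔ ∃ c : ℂ, x = c • v) := by
  classical
  have hmem : ∀ e ∈ G.edgeFinset, e ∈ G.edgeSet := fun e he =>
    (SimpleGraph.mem_edgeFinset).mp he
  have hsumPSD : (∑ e ∈ G.edgeFinset, H e).PosSemidef := by
    refine Finset.sum_induction H Matrix.PosSemidef
      (fun a b ha hb => ha.add hb) Matrix.PosSemidef.zero ?_
    exact fun e he => hPSD e (hmem e he)
  have hsumv : (∑ e ∈ G.edgeFinset, H e) *ᵥ v = 0 := by
    rw [sum_mulVec_aux]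
    exact Finset.sum_eq_zero fun e he => hHv e (hmem e he)
  refine ⟨hsumPSD, hsumv, fun x => ⟨fun hx => ?_, fun ⟨c, hc⟩ => ?_⟩⟩
  · -- each edge term kills x
    have hquad : ∀ e ∈ G.edgeFinset, star x ⬝ᵥ H e *ᵥ x = 0 := by
      have hsum0 : ∑ e ∈ G.edgeFinset, star x ⬝ᵥ H e *ᵥ x = 0 := by
        have : star x ⬝ᵥ (∑ e ∈ G.edgeFinset, H e *ᵥ x) =
            ∑ e ∈ G.edgeFinset, star x ⬝ᵥ H e *ᵥ x := by
          simp [dotProduct, Finset.mul_sum, Finset.sum_apply]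
          rw [Finset.sum_comm]
        rw [← this, ← sum_mulVec_aux, hx, dotProduct_zero]
      intro e he
      have := (Finset.sum_eq_zero_iff_of_nonneg
        (fun e he => ((hPSD e (hmem e he)).dotProduct_mulVec_nonneg x))).mp hsum0
      exact this e he
    have hker : ∀ e ∈ G.edgeFinset, H e *ᵥ x = 0 := fun e he =>
      ((hPSD e (hmem e he)).dotProduct_mulVec_zero_iff x).mp (hquad e he)
    have hadj : ∀ s t : Fin N, G.Adj s t → x s * v t = x t * v s := by
      intro s t hst
      have he : s(s, t) ∈ G.edgeSet := hst
      exact hkerE _ he s t rfl x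
        (hker _ (SimpleGraph.mem_edgeFinset.mpr he))
    have hwalk : ∀ (i j : Fin N), G.Reachable i j → x i * v j = x j * v i := by
      intro i j hr
      obtain ⟨p⟩ := hr
      induction p with
      | nil => rfl
      | @cons a b c hab p ih =>
        have h1 : x a * v b = x b * v a := hadj a b hab
        have h2 : x b * v c = x c * v b := ih
        have := hv b
        apply mul_left_cancel₀ (hv b)
        calc v b * (x a * v c) = (x a * v b) * v c := by ring
          _ = (x b * v a) * v c := by rw [h1]
          _ = (x b * v c) * v a := by ring
          _ = (x c * v b) * v a := by rw [h2]
          _ = v b * (x c * v a) := by ring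
    obtain ⟨i0⟩ : Nonempty (Fin N) := ⟨⟨0, hN⟩⟩
    refine ⟨x i0 / v i0, ?_⟩
    funext j
    have := hwalk i0 j (hG i0 j)
    show x j = (x i0 / v i0) * v j
    rw [div_mul_eq_mul_div, eq_div_iff (hv i0)]
    exact this.symm
  · subst hc
    rw [Matrix.mulVec_smul, hsumv, smul_zero]
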